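/- Let F be a field, f, f₁ ∈ F[x][y] monic in x with positive degree in x, and suppose there exist g_k, h_k, ℓ_k ∈ F[x][y] and an integer N with f ≡ g_k·h_k (mod y^N) and f₁ ≡ g_k·ℓ_k (mod y^N), where g_k is monic in x of positive degree and N > deg_y(Res_x(f, f₁)). If Res_x(f, f₁) ≠ 0, then Res_x(f, f₁) ≡ 0 (mod y^N), a contradiction; hence gcd_x(f, f₁) is nontrivial, i.e., f and f₁ share a common factor of positive degree in x. -/

import Mathlib

open Polynomial

/-- The Sylvester matrix of `f` and `g`, where `m` bounds the degree of `f` and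
`n` bounds the degree of `g`. -/
noncomputable def sylvesterMatrix {R : Type*} [CommRing R] (m n : ℕ) (f g : R[X]) :
    Matrix (Fin (m + n)) (Fin (m + n)) R :=
  Matrix.of fun i j =>
    if (j : ℕ) < n then
      (if (j : ℕ) ≤ (i : ℕ) then f.coeff ((i : ℕ) - (j : ℕ)) else 0)
    else
      (if (j : ℕ) - n ≤ (i : ℕ) then g.coeff ((i : ℕ) - ((j : ℕ) - n)) else 0)

/-- The resultant of `f` and `g`: the determinant of their Sylvester matrix. -/
noncomputable def resultant {R : Type*} [CommRing R] (f g : R[X]) : R :=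
  (sylvesterMatrix f.natDegree g.natDegree f g).det

section Aux

variable {R : Type*} [CommRing R]

lemma coeff_sum_fin {M : ℕ} (a : Fin M → R) (k : ℕ) :
    (∑ i : Fin M, C (a i) * X ^ (i : ℕ)).coeff k = if h : k < M then a ⟨k, h⟩ else 0 := by
  rw [finset_sum_coeff]
  simp only [coeff_C_mul, coeff_X_pow, mul_ite, mul_one, mul_zero]
  split
  · rename_i h
    rw [Finset.sum_eq_single (⟨k, h⟩ : Fin M)]
    · simp
    · intro i _ hi
      simp only [ite_eq_right_iff]
      intro he; exact absurd (Fin.ext he.symm) hi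
    · simp
  · rename_i h
    push_neg at h
    apply Finset.sum_eq_zero
    intro i _
    simp only [ite_eq_right_iff]
    intro he
    exact absurd (he ▸ i.isLt) (by omega)

lemma sylvester_col_lt (m n : ℕ) (f g : R[X]) (hf : f.natDegree ≤ m)
    (j : Fin (m + n)) (hj : (j : ℕ) < n) :
    f * X ^ (j : ℕ) = ∑ i : Fin (m + n), C (sylvesterMatrix m n f g i j) * X ^ (i : ℕ) := by
  ext k
  rw [coeff_mul_X_pow', coeff_sum_fin]
  by_cases hk : k < m + n
  · rw [dif_pos hk]
    exact (if_pos hj).symm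
  · rw [dif_neg hk]
    split
    · apply coeff_eq_zero_of_natDegree_lt
      omega
    · rfl

lemma sylvester_col_ge (m n : ℕ) (f g : R[X]) (hg : g.natDegree ≤ n)
    (j : Fin (m + n)) (hj : ¬ (j : ℕ) < n) :
    g * X ^ ((j : ℕ) - n) = ∑ i : Fin (m + n), C (sylvesterMatrix m n f g i j) * X ^ (i : ℕ) := by
  ext k
  rw [coeff_mul_X_pow', coeff_sum_fin]
  by_cases hk : k < m + n
  · rw [dif_pos hk]
    exact (if_neg hj).symm
  · rw [dif_neg hk]
    split
    · apply coeff_eq_zero_of_natDegree_lt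
      have := j.isLt
      omega
    · rfl

lemma sylvester_mulVec (m n : ℕ) (f g : R[X]) (hf : f.natDegree ≤ m) (hg : g.natDegree ≤ n)
    (c : Fin (m + n) → R) :
    (∑ j : Fin (m + n), if (j : ℕ) < n then C (c j) * X ^ (j : ℕ) else 0) * f +
      (∑ j : Fin (m + n), if (j : ℕ) < n then 0 else C (c j) * X ^ ((j : ℕ) - n)) * g =
    ∑ i : Fin (m + n), C ((sylvesterMatrix m n f g).mulVec c i) * X ^ (i : ℕ) := by
  rw [Finset.sum_mul, Finset.sum_mul, ← Finset.sum_add_distrib]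
  have step : ∀ j : Fin (m + n),
      (if (j : ℕ) < n then C (c j) * X ^ (j : ℕ) else 0) * f +
        (if (j : ℕ) < n then 0 else C (c j) * X ^ ((j : ℕ) - n)) * g =
      ∑ i : Fin (m + n), C (c j * sylvesterMatrix m n f g i j) * X ^ (i : ℕ) := by
    intro j
    by_cases hj : (j : ℕ) < n
    · rw [if_pos hj, if_pos hj, zero_mul, add_zero, mul_assoc, mul_comm (X ^ (j:ℕ)) f,
        sylvester_col_lt m n f g hf j hj, Finset.mul_sum]
      simp only [C_mul, mul_assoc]
    · rw [if_neg hj, if_neg hj, zero_mul, zero_add, mul_assoc, mul_comm (X ^ ((j:ℕ)-n)) g,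
        sylvester_col_ge m n f g hg j hj, Finset.mul_sum]
      simp only [C_mul, mul_assoc]
  rw [Finset.sum_congr rfl (fun j _ => step j), Finset.sum_comm]
  refine Finset.sum_congr rfl fun i _ => ?_
  rw [← Finset.sum_mul]
  congr 1
  rw [Matrix.mulVec, dotProduct, map_sum]
  exact Finset.sum_congr rfl fun j _ => by rw [mul_comm]

lemma exists_eq_C_resultant (f g : R[X]) (hfdeg : 0 < f.natDegree) :
    ∃ u v : R[X], u * f + v * g = C (_root_.resultant f g) := by
  set m := f.natDegree with hm
  set n := g.natDegree with hn
  have hpos : 0 < m + n := lt_of_lt_of_le hfdeg (Nat.le_add_right _ _)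
  set S := sylvesterMatrix m n f g with hS
  set z : Fin (m + n) := ⟨0, hpos⟩ with hz
  set c : Fin (m + n) → R := fun i => S.adjugate i z with hc
  refine ⟨_, _, (sylvester_mulVec m n f g le_rfl le_rfl c).trans ?_⟩
  have hmv : ∀ i, S.mulVec c i = S.det * (if i = z then 1 else 0) := by
    intro i
    have h1 : S.mulVec c i = (S * S.adjugate) i z := by
      simp [Matrix.mulVec, Matrix.mul_apply, dotProduct, hc]
    rw [h1, Matrix.mul_adjugate]
    simp [Matrix.one_apply]
  rw [Finset.sum_congr rfl fun i _ => by rw [hmv i]]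
  rw [Finset.sum_eq_single z]
  · simp [_root_.resultant, hS, hm, hn, hz]; rfl
  · intro i _ hi
    simp [hi]
  · simp

lemma natDegree_uPoly_le {m n : ℕ} (c : Fin (m + n) → R) (hn : 0 < n) :
    (∑ j : Fin (m + n), if (j : ℕ) < n then C (c j) * X ^ (j : ℕ) else 0).natDegree ≤ n - 1 := by
  apply natDegree_sum_le_of_forall_le
  intro j _
  split
  · refine le_trans (natDegree_C_mul_X_pow_le _ _) ?_
    omega
  · simp

lemma natDegree_vPoly_le {m n : ℕ} (c : Fin (m + n) → R) (hm : 0 < m) :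
    (∑ j : Fin (m + n), if (j : ℕ) < n then 0 else C (c j) * X ^ ((j : ℕ) - n)).natDegree
      ≤ m - 1 := by
  apply natDegree_sum_le_of_forall_le
  intro j _
  split
  · simp
  · refine le_trans (natDegree_C_mul_X_pow_le _ _) ?_
    have := j.isLt
    omega

lemma coeff_uPoly {m n : ℕ} (c : Fin (m + n) → R) (j0 : Fin (m + n)) (hj0 : (j0 : ℕ) < n) :
    (∑ j : Fin (m + n), if (j : ℕ) < n then C (c j) * X ^ (j : ℕ) else 0).coeff (j0 : ℕ)
      = c j0 := by
  rw [finset_sum_coeff]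
  rw [Finset.sum_eq_single j0]
  · simp [hj0]
  · intro i _ hi
    split
    · rw [coeff_C_mul, coeff_X_pow, if_neg (fun he => hi (Fin.ext he.symm)), mul_zero]
    · simp
  · simp

lemma coeff_vPoly {m n : ℕ} (c : Fin (m + n) → R) (j0 : Fin (m + n)) (hj0 : ¬ (j0 : ℕ) < n) :
    (∑ j : Fin (m + n), if (j : ℕ) < n then 0 else C (c j) * X ^ ((j : ℕ) - n)).coeff
        ((j0 : ℕ) - n) = c j0 := by
  rw [finset_sum_coeff]
  rw [Finset.sum_eq_single j0]
  · simp [hj0]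
  · intro i _ hi
    split
    · simp
    · rename_i hi2
      rw [coeff_C_mul, coeff_X_pow, if_neg, mul_zero]
      intro he
      rename_i hi2
      have := i.isLt
      exact hi (Fin.ext (by omega))
  · simp

end Aux

/-- Zero resultant implies a common factor of positive degree, for monic polynomials
over `F[y]`. -/
lemma common_factor_of_resultant_eq_zero {F : Type*} [Field F]
    (f g : Polynomial (Polynomial F)) (hf : f.Monic) (hfdeg : 0 < f.natDegree)
    (hg : g.Monic) (hgdeg : 0 < g.natDegree) (hres : _root_.resultant f g = 0) :
    ∃ d : Polynomial (Polynomial F), 0 < d.natDegree ∧ d ∣ f ∧ d ∣ g := by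
  classical
  set Rb := Polynomial F
  set K := FractionRing Rb
  set φ := algebraMap Rb K with hφ
  have hφinj : Function.Injective φ := IsFractionRing.injective Rb K
  set m := f.natDegree with hm
  set n := g.natDegree with hn
  set f' := f.map φ with hf'
  set g' := g.map φ with hg'
  have hf'm : f'.Monic := hf.map φ
  have hg'm : g'.Monic := hg.map φ
  have hf'deg : f'.natDegree = m := hf.natDegree_map φ
  have hg'deg : g'.natDegree = n := hg.natDegree_map φ
  -- the Sylvester matrix commutes with the base change
  have hSmap : sylvesterMatrix m n f' g' = φ.mapMatrix (sylvesterMatrix m n f g) := by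
    ext i j
    simp only [sylvesterMatrix, Matrix.of_apply, RingHom.mapMatrix_apply, Matrix.map_apply,
      hf', hg', coeff_map]
    split <;> split <;> simp
  have hdet : (sylvesterMatrix m n f' g').det = 0 := by
    rw [hSmap, ← RingHom.map_det]
    have h : (sylvesterMatrix m n f g).det = _root_.resultant f g := rfl
    rw [h, hres, map_zero]
  obtain ⟨c, hc0, hcv⟩ := (Matrix.exists_mulVec_eq_zero_iff).mpr hdet
  set u : K[X] := ∑ j : Fin (m + n), if (j : ℕ) < n then C (c j) * X ^ (j : ℕ) else 0 with hu
  set v : K[X] := ∑ j : Fin (m + n), if (j : ℕ) < n then 0 else C (c j) * X ^ ((j : ℕ) - n)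
    with hv
  have hkey : u * f' + v * g' = 0 := by
    rw [hu, hv, sylvester_mulVec m n f' g' hf'deg.le hg'deg.le c, hcv]
    simp
  -- at least one of u, v is nonzero
  obtain ⟨j0, hj0⟩ := Function.ne_iff.mp hc0
  have huv : u ≠ 0 ∨ v ≠ 0 := by
    by_cases hj : (j0 : ℕ) < n
    · left
      intro h0
      rw [← coeff_uPoly c j0 hj, ← hu, h0] at hj0
      simp at hj0
    · right
      intro h0
      rw [← coeff_vPoly c j0 hj, ← hv, h0] at hj0
      simp at hj0
  have hune : u ≠ 0 := by
    intro h0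
    rcases huv with h | h
    · exact h h0
    apply h
    rw [h0, zero_mul, zero_add] at hkey
    exact (mul_eq_zero.mp hkey).resolve_right hg'm.ne_zero
  have hvne : v ≠ 0 := by
    intro h0
    rw [h0, zero_mul, add_zero] at hkey
    exact hune ((mul_eq_zero.mp hkey).resolve_right hf'm.ne_zero)
  -- f' and g' are not coprime
  have hnc : ¬ IsCoprime f' g' := by
    intro hcop
    have hdvd : f' ∣ v * g' := by
      refine ⟨-u, ?_⟩
      linear_combination hkey
    have : f' ∣ v := hcop.dvd_of_dvd_mul_right hdvd
    have h1 := Polynomial.natDegree_le_of_dvd this hvne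
    have h2 := natDegree_vPoly_le c hfdeg
    rw [hf'deg] at h1
    rw [← hv] at h2
    omega
  -- the gcd over K[X] is a nonunit of positive degree
  set d' := EuclideanDomain.gcd f' g' with hd'
  have hd'f : d' ∣ f' := EuclideanDomain.gcd_dvd_left _ _
  have hd'g : d' ∣ g' := EuclideanDomain.gcd_dvd_right _ _
  have hd'ne : d' ≠ 0 := fun h =>
    hf'm.ne_zero (EuclideanDomain.gcd_eq_zero_iff.mp (hd' ▸ h)).1
  have hd'nu : ¬ IsUnit d' := fun h => hnc (EuclideanDomain.gcd_isUnit_iff.mp h)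
  set d'' := d' * C (leadingCoeff d')⁻¹ with hd''
  have hd''m : d''.Monic := monic_mul_leadingCoeff_inv hd'ne
  have hd''d : d'' ∣ d' := by
    refine ⟨C (leadingCoeff d'), ?_⟩
    rw [hd'', mul_assoc, ← C_mul, inv_mul_cancel₀ (leadingCoeff_ne_zero.mpr hd'ne), C_1, mul_one]
  have hd''f : d'' ∣ f' := hd''d.trans hd'f
  have hd''g : d'' ∣ g' := hd''d.trans hd'g
  obtain ⟨d, hdmap⟩ := IsIntegrallyClosed.eq_map_mul_C_of_dvd K hf hd''f
  rw [hd''m.leadingCoeff, C_1, mul_one] at hdmap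
  have hdm : d.Monic := monic_of_injective hφinj (hdmap ▸ hd''m)
  refine ⟨d, ?_, ?_, ?_⟩
  · rw [← hdm.natDegree_map φ, hdmap]
    rcases Nat.eq_zero_or_pos d''.natDegree with h0 | h
    · exfalso
      have : d'' = 1 := hd''m.natDegree_eq_zero.mp h0
      apply hd'nu
      have : IsUnit d'' := this ▸ isUnit_one
      exact isUnit_of_mul_isUnit_left (hd'' ▸ this)
    · exact h
  · exact hf.dvd_of_fraction_map_dvd_fraction_map hdm (hdmap ▸ hd''f)
  · exact hg.dvd_of_fraction_map_dvd_fraction_map hdm (hdmap ▸ hd''g)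


/-- Hensel-lifted factors recover true factors: if `f, f₁ ∈ F[y][x]` are monic in `x`
of positive degree, and a monic `g_k` of positive degree in `x` divides both `f` and
`f₁` modulo `y^N` with `N > deg_y Res_x(f, f₁)`, then `f` and `f₁` share a common
factor of positive degree in `x`. -/
theorem common_factor_of_hensel_lift {F : Type*} [Field F]
    (f f₁ gk hk lk : Polynomial (Polynomial F)) (N : ℕ)
    (hf : f.Monic) (hfdeg : 0 < f.natDegree)
    (hf₁ : f₁.Monic) (hf₁deg : 0 < f₁.natDegree)
    (hgk : gk.Monic) (hgkdeg : 0 < gk.natDegree)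
    (hN : (_root_.resultant f f₁).natDegree < N)
    (hcong₁ : f - gk * hk ∈
      Ideal.span {(Polynomial.C (Polynomial.X ^ N) : Polynomial (Polynomial F))})
    (hcong₂ : f₁ - gk * lk ∈
      Ideal.span {(Polynomial.C (Polynomial.X ^ N) : Polynomial (Polynomial F))}) :
    ∃ d : Polynomial (Polynomial F), 0 < d.natDegree ∧ d ∣ f ∧ d ∣ f₁ := by
  classical
  have hres0 : _root_.resultant f f₁ = 0 := by
    by_contra hne
    obtain ⟨u, v, huv⟩ := exists_eq_C_resultant f f₁ hfdeg
    obtain ⟨a, ha⟩ := Ideal.mem_span_singleton.mp hcong₁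
    obtain ⟨b, hb⟩ := Ideal.mem_span_singleton.mp hcong₂
    set I : Ideal (Polynomial F) := Ideal.span {(X : Polynomial F) ^ N} with hI
    set q := Ideal.Quotient.mk I with hq
    have hXq : q ((X : Polynomial F) ^ N) = 0 :=
      Ideal.Quotient.eq_zero_iff_mem.mpr (Ideal.subset_span rfl)
    have hbez : C (_root_.resultant f f₁) =
        gk * (u * hk + v * lk) + C ((X : Polynomial F) ^ N) * (u * a + v * b) := by
      linear_combination u * ha + v * hb - huv
    have h2 : Polynomial.map q (C (_root_.resultant f f₁)) =
        Polynomial.map q gk * Polynomial.map q (u * hk + v * lk) := by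
      rw [hbez, Polynomial.map_add, Polynomial.map_mul, Polynomial.map_mul,
        Polynomial.map_C, hXq, C_0, zero_mul, add_zero]
    have hw0 : Polynomial.map q (u * hk + v * lk) = 0 := by
      by_contra hw
      haveI : Nontrivial (Polynomial F ⧸ I) :=
        Polynomial.nontrivial_iff.mp (nontrivial_of_ne _ _ hw)
      have hdeg := Polynomial.Monic.natDegree_mul' (hgk.map q) hw
      rw [← h2, Polynomial.map_C, natDegree_C, hgk.natDegree_map q] at hdeg
      omega
    rw [hw0, mul_zero, Polynomial.map_C] at h2
    have hq0 : q (_root_.resultant f f₁) = 0 := C_eq_zero.mp h2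
    have hdvd : (X : Polynomial F) ^ N ∣ _root_.resultant f f₁ :=
      Ideal.mem_span_singleton.mp (Ideal.Quotient.eq_zero_iff_mem.mp hq0)
    have := Polynomial.natDegree_le_of_dvd hdvd hne
    rw [natDegree_X_pow] at this
    omega
  exact common_factor_of_resultant_eq_zero f f₁ hf hfdeg hf₁ hf₁deg hres0
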